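/- Let G be a graph on n vertices containing no path on 4 vertices as a subgraph. Then G has at most n edges. -/

import Mathlib

open SimpleGraph

/-- `H` is contained in `G` as a subgraph: there is an injective map preserving adjacency. -/
def Contains {α β : Type*} (G : SimpleGraph α) (H : SimpleGraph β) : Prop :=
  ∃ f : β ↪ α, ∀ a b, H.Adj a b → G.Adj (f a) (f b)

/-- The join of two graphs: all cross edges are added. -/
def graphJoin {α β : Type*} (G : SimpleGraph α) (H : SimpleGraph β) : SimpleGraph (α ⊕ β) where
  Adj x y :=
    match x, y with
    | Sum.inl a, Sum.inl b => G.Adj a b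
    | Sum.inl _, Sum.inr _ => True
    | Sum.inr _, Sum.inl _ => True
    | Sum.inr a, Sum.inr b => H.Adj a b
  symm := by
    constructor
    rintro (a|a) (b|b) h
    · exact h.symm
    · trivial
    · trivial
    · exact h.symm
  loopless := by
    constructor
    rintro (a|a) h
    · exact G.irrefl h
    · exact H.irrefl h

/-- The join of a clique on `t` vertices with an independent set of `m` vertices. -/
def cliqueIndepJoin (t m : ℕ) : SimpleGraph (Fin t ⊕ Fin m) :=
  graphJoin (completeGraph (Fin t)) (⊥ : SimpleGraph (Fin m))

set_option linter.unusedSectionVars false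
section Aux
variable {V : Type} [Fintype V] [LinearOrder V] [DecidableEq V]
variable (G : SimpleGraph V) [DecidableRel G.Adj]

lemma eg_contains_path4 {a b c d : V} (hab : G.Adj a b) (hbc : G.Adj b c) (hcd : G.Adj c d)
    (hac : a ≠ c) (had : a ≠ d) (hbd : b ≠ d) :
    ∃ f : Fin 4 ↪ V, ∀ i j, (pathGraph 4).Adj i j → G.Adj (f i) (f j) := by
  refine ⟨⟨![a, b, c, d], ?_⟩, ?_⟩
  · intro i j hij
    fin_cases i <;> fin_cases j <;>
      simp_all [hab.ne, hbc.ne, hcd.ne, hab.ne', hbc.ne', hcd.ne', hac, had, hbd,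
        hac.symm, had.symm, hbd.symm]
  · intro i j hij
    rw [pathGraph_adj] at hij
    fin_cases i <;> fin_cases j <;> simp_all <;>
      first
        | exact hab | exact hbc | exact hcd
        | exact hab.symm | exact hbc.symm | exact hcd.symm

open Classical in
/-- Pick an endpoint of the edge `{x,y}` (`x` considered first). -/
noncomputable def egPick (x y : V) : V :=
  if G.degree x = 1 then x else if G.degree y = 1 then y
  else if ∃ z, G.Adj x z ∧ G.Adj y z ∧ x < z ∧ z < y then y else x

lemma egPick_mem (x y : V) : egPick G x y = x ∨ egPick G x y = y := by
  unfold egPick; split_ifs <;> simp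

/-- symmetric version on `Sym2`. -/
noncomputable def egEpick : Sym2 V → V :=
  Sym2.lift ⟨fun x y => if x ≤ y then egPick G x y else egPick G y x, by
    intro x y
    rcases lt_trichotomy x y with h | h | h
    · simp [le_of_lt h, not_le.mpr h]
    · simp [h]
    · simp [le_of_lt h, not_le.mpr h]⟩

lemma egEpick_mk (x y : V) :
    egEpick G s(x, y) = if x ≤ y then egPick G x y else egPick G y x := rfl

lemma egEpick_mem (x y : V) : egEpick G s(x, y) = x ∨ egEpick G s(x, y) = y := by
  rw [egEpick_mk]; split_ifs
  · exact egPick_mem G x y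
  · exact (egPick_mem G y x).symm

lemma eg_exists_adj_ne {a : V} (h : 2 ≤ G.degree a) (v : V) : ∃ w, G.Adj a w ∧ w ≠ v := by
  have h2 : 1 < (G.neighborFinset a).card := by
    rw [card_neighborFinset_eq_degree]; omega
  obtain ⟨w, hw, hwv⟩ := Finset.exists_mem_ne h2 v
  exact ⟨w, (G.mem_neighborFinset a w).mp hw, hwv⟩

/-- Core injectivity lemma: two edges at `v` cannot both pick `v`. -/
lemma eg_core
    (hP4 : ¬ ∃ f : Fin 4 ↪ V, ∀ i j, (pathGraph 4).Adj i j → G.Adj (f i) (f j))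
    {v p q : V} (hvp : G.Adj v p) (hvq : G.Adj v q) (hpq : p ≠ q)
    (h1 : egEpick G s(v, p) = v) (h2 : egEpick G s(v, q) = v) : False := by
  have hdv : 2 ≤ G.degree v := by
    rw [← card_neighborFinset_eq_degree]
    exact Finset.one_lt_card.mpr ⟨p, (G.mem_neighborFinset v p).mpr hvp,
      q, (G.mem_neighborFinset v q).mpr hvq, hpq⟩
  have hdvne : G.degree v ≠ 1 := by omega
  -- analyze what `egEpick s(v,x) = v` means
  have analyze : ∀ x : V, G.Adj v x → egEpick G s(v, x) = v →
      G.degree x ≠ 1 ∧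
      ((v < x → ¬ ∃ z, G.Adj v z ∧ G.Adj x z ∧ v < z ∧ z < x) ∧
       (x < v → ∃ z, G.Adj x z ∧ G.Adj v z ∧ x < z ∧ z < v)) := by
    intro x hvx hpick
    rw [egEpick_mk] at hpick
    rcases lt_trichotomy v x with h | h | h
    · rw [if_pos h.le] at hpick
      unfold egPick at hpick
      rw [if_neg hdvne] at hpick
      by_cases h1' : G.degree x = 1
      · rw [if_pos h1'] at hpick; exact absurd hpick.symm hvx.ne
      · rw [if_neg h1'] at hpick
        by_cases h2' : ∃ z, G.Adj v z ∧ G.Adj x z ∧ v < z ∧ z < x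
        · rw [if_pos h2'] at hpick; exact absurd hpick.symm hvx.ne
        · exact ⟨h1', fun _ => h2', fun hc => absurd h (not_lt.mpr hc.le)⟩
    · exact absurd h hvx.ne
    · rw [if_neg (not_le.mpr h)] at hpick
      unfold egPick at hpick
      by_cases h1' : G.degree x = 1
      · rw [if_pos h1'] at hpick; exact absurd hpick hvx.ne'
      · rw [if_neg h1', if_neg hdvne] at hpick
        by_cases h3' : ∃ z, G.Adj x z ∧ G.Adj v z ∧ x < z ∧ z < v
        · exact ⟨h1', fun hc => absurd h (not_lt.mpr hc.le), fun _ => h3'⟩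
        · rw [if_neg h3'] at hpick; exact absurd hpick hvx.ne'
  obtain ⟨hdp, hcondp⟩ := analyze p hvp h1
  obtain ⟨hdq, hcondq⟩ := analyze q hvq h2
  have hdp2 : 2 ≤ G.degree p := by
    have : 0 < G.degree p := G.degree_pos_iff_exists_adj p |>.mpr ⟨v, hvp.symm⟩
    omega
  have hdq2 : 2 ≤ G.degree q := by
    have : 0 < G.degree q := G.degree_pos_iff_exists_adj q |>.mpr ⟨v, hvq.symm⟩
    omega
  -- p and q are adjacent
  have hpq' : G.Adj p q := by
    by_contra hn
    obtain ⟨w, hpw, hwv⟩ := eg_exists_adj_ne G hdp2 v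
    have hwq : w ≠ q := fun h => hn (h ▸ hpw)
    exact hP4 (eg_contains_path4 G hpw.symm hvp.symm hvq hwv hwq hpq)
  -- every common neighbor of v and p is q ; of v and q is p
  have hcnp : ∀ z, G.Adj v z → G.Adj p z → z = q := by
    intro z hvz hpz
    by_contra hzq
    exact hP4 (eg_contains_path4 G hvq.symm hvp hpz hpq.symm (Ne.symm hzq) hvz.ne)
  have hcnq : ∀ z, G.Adj v z → G.Adj q z → z = p := by
    intro z hvz hqz
    by_contra hzp
    exact hP4 (eg_contains_path4 G hvp.symm hvq hqz hpq (Ne.symm hzp) hvz.ne)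
  -- final order case bash
  rcases lt_trichotomy v p with hvp' | h | hvp'
  · rcases lt_trichotomy v q with hvq' | h | hvq'
    · rcases lt_trichotomy p q with hpq'' | h | hpq''
      · exact hcondq.1 hvq' ⟨p, hvp, hpq'.symm, hvp', hpq''⟩
      · exact hpq h
      · exact hcondp.1 hvp' ⟨q, hvq, hpq', hvq', hpq''⟩
    · exact hvq.ne h
    · obtain ⟨z, hqz, hvz, _, hzv⟩ := hcondq.2 hvq'
      have hzp := hcnq z hvz hqz
      exact lt_asymm hvp' (hzp ▸ hzv)
  · exact hvp.ne h
  · rcases lt_trichotomy v q with hvq' | h | hvq'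
    · obtain ⟨z, hpz, hvz, _, hzv⟩ := hcondp.2 hvp'
      have hzq := hcnp z hvz hpz
      exact lt_asymm hvq' (hzq ▸ hzv)
    · exact hvq.ne h
    · obtain ⟨z, hpz, hvz, hxz, hzv⟩ := hcondp.2 hvp'
      obtain ⟨z', hqz', hvz', hxz', hzv'⟩ := hcondq.2 hvq'
      have hzq := hcnp z hvz hpz
      have hzp := hcnq z' hvz' hqz'
      subst hzq; subst hzp
      exact lt_asymm hxz hxz'

lemma eg_main
    (hP4 : ¬ ∃ f : Fin 4 ↪ V, ∀ i j, (pathGraph 4).Adj i j → G.Adj (f i) (f j)) :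
    G.edgeSet.ncard ≤ Fintype.card V := by
  have hinj : Set.InjOn (egEpick G) G.edgeSet := by
    intro e1 he1 e2 he2 heq
    induction e1 using Sym2.inductionOn with
    | hf a b =>
    induction e2 using Sym2.inductionOn with
    | hf c d =>
    rw [mem_edgeSet] at he1 he2
    by_contra hne
    rcases egEpick_mem G a b with hm1 | hm1 <;> rcases egEpick_mem G c d with hm2 | hm2
    · -- v = a = c
      have hac : a = c := by rw [← hm1, heq, hm2]
      have hbd : b ≠ d := fun h => hne (by rw [hac, h])
      exact eg_core G hP4 he1 (hac ▸ he2) hbd hm1 (by rw [hac]; exact hm2)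
    · have had : a = d := by rw [← hm1, heq, hm2]
      have hbc : b ≠ c := fun h => hne (by rw [had, h, Sym2.eq_swap])
      refine eg_core G hP4 he1 (had ▸ he2.symm) hbc hm1 ?_
      rw [had, Sym2.eq_swap]; exact hm2
    · have hbc : b = c := by rw [← hm1, heq, hm2]
      have had : a ≠ d := fun h => hne (by rw [hbc, h, Sym2.eq_swap])
      refine eg_core G hP4 he1.symm (hbc ▸ he2) had ?_ ?_
      · rw [Sym2.eq_swap]; exact hm1
      · rw [hbc]; exact hm2
    · have hbd : b = d := by rw [← hm1, heq, hm2]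
      have hac : a ≠ c := fun h => hne (by rw [hbd, h])
      refine eg_core G hP4 he1.symm (hbd ▸ he2.symm) hac ?_ ?_
      · rw [Sym2.eq_swap]; exact hm1
      · rw [hbd, Sym2.eq_swap]; exact hm2
  calc G.edgeSet.ncard = (egEpick G '' G.edgeSet).ncard := (Set.ncard_image_of_injOn hinj).symm
    _ ≤ (Set.univ : Set V).ncard :=
        Set.ncard_le_ncard (Set.subset_univ _) (Set.finite_univ)
    _ = Fintype.card V := by simp [Set.ncard_univ, Nat.card_eq_fintype_card]

end Aux

/-- Erdős–Gallai, case k = 3: a graph on `n` vertices with no path on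
4 vertices has at most `n` edges. -/
theorem stmt_7 {V : Type} [Fintype V] (G : SimpleGraph V)
    (hP4 : ¬ Contains G (SimpleGraph.pathGraph 4)) :
    G.edgeSet.ncard ≤ Fintype.card V := by
  classical
  letI : LinearOrder V := LinearOrder.lift' (Fintype.equivFin V) (Fintype.equivFin V).injective
  exact eg_main G hP4
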